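/- arXiv:2408.14835 — 2 statements merged into one kernel-verified Lean document; each statement's English description precedes it below -/
import Mathlib

section
/- For all real x with 0 < x < 1, Malmstén's representation holds: log Γ(x) = ∫₀^∞ [e^{-(x-1)t} - (x-1)(e^{-t} - 1) - 1] / (t·(e^t - 1)) dt. -/
open Real

open Real MeasureTheory Set Filter intervalIntegral
open scoped Topology

noncomputable def frl (a t : ℝ) : ℝ := (Real.exp (-t) - Real.exp (-a * t)) / t

lemma abs_exp_neg_sub_exp_neg {u v : ℝ} (hu : 0 ≤ u) (hv : 0 ≤ v) :
    |Real.exp (-u) - Real.exp (-v)| ≤ |u - v| := by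
  wlog h : v ≤ u generalizing u v
  · rw [abs_sub_comm, abs_sub_comm u v]; exact this hv hu (le_of_not_ge h)
  rw [abs_of_nonpos (by simp [Real.exp_le_exp]; linarith), abs_of_nonneg (by linarith)]
  have h1 : Real.exp (-u) = Real.exp (-v) * Real.exp (-(u - v)) := by
    rw [← Real.exp_add]; ring_nf
  have h2 : 1 - (u - v) ≤ Real.exp (-(u - v)) := by
    have := Real.add_one_le_exp (-(u - v)); linarith
  have h3 : Real.exp (-v) ≤ 1 := Real.exp_le_one_iff.mpr (by linarith)
  have h4 : Real.exp (-v) * (1 - (u-v)) ≤ Real.exp (-v) * Real.exp (-(u-v)) :=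
    mul_le_mul_of_nonneg_left h2 (Real.exp_pos _).le
  nlinarith [Real.exp_pos (-v)]

lemma integrableOn_frl {a : ℝ} (ha : 0 < a) : IntegrableOn (frl a) (Ioi 0) := by
  have hc : 0 < min 1 a := lt_min one_pos ha
  apply Integrable.mono' ((exp_neg_integrableOn_Ioi 0 hc).const_mul |1 - a|)
  · apply ContinuousOn.aestronglyMeasurable _ measurableSet_Ioi
    apply ContinuousOn.div (by fun_prop) continuousOn_id
    exact fun t ht => ne_of_gt ht
  · filter_upwards [self_mem_ae_restrict measurableSet_Ioi] with t ht
    rw [frl, norm_div, Real.norm_eq_abs, Real.norm_eq_abs, abs_of_pos (mem_Ioi.mp ht),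
      div_le_iff₀ (mem_Ioi.mp ht)]
    set c := min 1 a with hcdef
    have h1 : Real.exp (-t) = Real.exp (-(c*t)) * Real.exp (-((1 - c) * t)) := by
      rw [← Real.exp_add]; ring_nf
    have h2 : Real.exp (-a * t) = Real.exp (-(c*t)) * Real.exp (-((a - c) * t)) := by
      rw [← Real.exp_add]; ring_nf
    have hb : |Real.exp (-((1 - c) * t)) - Real.exp (-((a - c) * t))| ≤ |1 - a| * t := by
      have := abs_exp_neg_sub_exp_neg
        (mul_nonneg (by simp [hcdef, min_le_left] : (0:ℝ) ≤ 1 - c) ht.le)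
        (mul_nonneg (by simp [hcdef, min_le_right] : (0:ℝ) ≤ a - c) ht.le)
      calc |Real.exp (-((1 - c) * t)) - Real.exp (-((a - c) * t))| ≤ |(1-c)*t - (a-c)*t| := this
        _ = |1 - a| * t := by rw [show (1-c)*t - (a-c)*t = (1-a)*t by ring, abs_mul, abs_of_pos (mem_Ioi.mp ht)]
    calc |Real.exp (-t) - Real.exp (-a * t)|
        = Real.exp (-(c*t)) * |Real.exp (-((1 - c) * t)) - Real.exp (-((a - c) * t))| := by
          rw [h1, h2, ← mul_sub, abs_mul, abs_of_pos (Real.exp_pos _)]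
      _ ≤ Real.exp (-(c*t)) * (|1 - a| * t) := by
          exact mul_le_mul_of_nonneg_left hb (Real.exp_pos _).le
      _ = |1 - a| * Real.exp (-c * t) * t := by ring_nf

lemma integral_exp_neg_mul {b : ℝ} (hb : 0 < b) :
    ∫ t in Ioi (0:ℝ), Real.exp (-b * t) = b⁻¹ := by
  have := integral_comp_mul_left_Ioi (fun u => Real.exp (-u)) 0 hb
  simp only [mul_zero, integral_exp_neg_Ioi, neg_zero, Real.exp_zero, smul_eq_mul, mul_one] at this
  simpa [neg_mul] using this

lemma frullani {a : ℝ} (ha : 0 < a) :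
    ∫ t in Ioi (0:ℝ), frl a t = Real.log a := by
  set Φ : ℝ → ℝ := fun a => ∫ t in Ioi (0:ℝ), frl a t with hΦ
  have hderiv : ∀ b ∈ uIcc 1 a, HasDerivAt Φ b⁻¹ b := by
    intro b hb
    have hb0 : 0 < b := by
      rcases le_total 1 a with h | h
      · rcases (uIcc_subset_uIcc_iff_le.mpr ⟨le_refl _, le_refl _⟩) hb with _
        have := hb.1; rw [min_eq_left h] at this; linarith
      · have := hb.1; rw [min_eq_right h] at this; linarith
    have key := _root_.hasDerivAt_integral_of_dominated_loc_of_deriv_le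
      (F := fun a t => frl a t) (F' := fun a t => Real.exp (-a * t))
      (x₀ := b) (bound := fun t => Real.exp (-(b/2) * t))
      (μ := volume.restrict (Ioi 0)) (Metric.ball_mem_nhds b (half_pos hb0))
      ?_ ?_ ?_ ?_ ?_ ?_
    · have : (∫ t in Ioi (0:ℝ), Real.exp (-b * t)) = b⁻¹ := integral_exp_neg_mul hb0
      rw [← this]; exact key.2
    · filter_upwards with c
      apply ContinuousOn.aestronglyMeasurable _ measurableSet_Ioi
      exact ContinuousOn.div (by fun_prop) continuousOn_id (fun t ht => ne_of_gt ht)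
    · exact integrableOn_frl hb0
    · exact (ContinuousOn.aestronglyMeasurable (by fun_prop) measurableSet_Ioi)
    · filter_upwards [self_mem_ae_restrict measurableSet_Ioi] with t ht c hc
      rw [Real.norm_eq_abs, abs_of_pos (Real.exp_pos _), Real.exp_le_exp]
      have : b/2 < c := by
        have := abs_sub_lt_iff.mp (mem_ball_iff_norm.mp hc : |c - b| < b/2)
        linarith [this.2]
      have ht2 : (0:ℝ) < t := ht
      nlinarith
    · exact exp_neg_integrableOn_Ioi 0 (half_pos hb0)
    · filter_upwards [self_mem_ae_restrict measurableSet_Ioi] with t ht c hc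
      have h1 : HasDerivAt (fun a : ℝ => Real.exp (-a * t)) (-t * Real.exp (-c * t)) c := by
        have : HasDerivAt (fun a : ℝ => -a * t) (-t) c := by
          simpa using ((hasDerivAt_id c).neg.mul_const t)
        simpa [mul_comm] using this.exp
      have h2 : HasDerivAt (fun a : ℝ => (Real.exp (-t) - Real.exp (-a * t)) / t)
          ((0 - (-t * Real.exp (-c * t))) / t) c :=
        ((hasDerivAt_const c (Real.exp (-t))).sub h1).div_const t
      have ht' : (t:ℝ) ≠ 0 := ne_of_gt ht
      have e : (0 - (-t * Real.exp (-c * t))) / t = Real.exp (-c * t) := by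
        rw [div_eq_iff ht']; ring
      rw [e] at h2
      exact h2
  have hΦ1 : Φ 1 = 0 := by
    rw [hΦ]; simp only
    have : ∀ t ∈ Ioi (0:ℝ), frl 1 t = 0 := by
      intro t _; simp [frl]
    rw [setIntegral_congr_fun measurableSet_Ioi this]; simp
  have hpos : ∀ s ∈ uIcc (1:ℝ) a, 0 < s := by
    intro s hs
    rcases le_total 1 a with h | h
    · have := hs.1; rw [min_eq_left h] at this; linarith
    · have := hs.1; rw [min_eq_right h] at this; linarith
  have hInt : IntervalIntegrable (fun s : ℝ => s⁻¹) volume 1 a := by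
    apply ContinuousOn.intervalIntegrable
    exact ContinuousOn.inv₀ continuousOn_id (fun s hs => ne_of_gt (hpos s hs))
  have := intervalIntegral.integral_eq_sub_of_hasDerivAt hderiv hInt
  rw [hΦ1, sub_zero, integral_inv (fun h => absurd (hpos 0 h) (lt_irrefl 0))] at this
  rw [show (∫ t in Ioi (0:ℝ), frl a t) = Φ a from rfl, ← this, Real.log_div (ne_of_gt ha) one_ne_zero, Real.log_one, sub_zero]

noncomputable def Ftg (x t : ℝ) : ℝ :=
  (Real.exp (-(x - 1) * t) - (x - 1) * (Real.exp (-t) - 1) - 1) / (t * (Real.exp t - 1))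

noncomputable def Ttail (x : ℝ) (n : ℕ) (t : ℝ) : ℝ :=
  Real.exp (-(n:ℝ) * t) *
    (x - Real.exp (-t) * (1 - Real.exp (-x * t)) / (1 - Real.exp (-t))) / t

lemma key_identity (x : ℝ) (n : ℕ) {t : ℝ} (ht : 0 < t) :
    x * frl n t + (∑ m ∈ Finset.range n, frl (m + 1) t)
      - ∑ m ∈ Finset.range (n + 1), frl (x + m) t
    = Ftg x t - Ttail x n t := by
  set r := Real.exp (-t) with hr
  set s := Real.exp (-x * t) with hs
  have hr0 : 0 < r := Real.exp_pos _
  have hr1 : r < 1 := Real.exp_lt_one_iff.mpr (by linarith)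
  have ht0 : t ≠ 0 := ne_of_gt ht
  have hrne : r - 1 ≠ 0 := by linarith
  have hu : Real.exp t = r⁻¹ := by rw [hr, ← Real.exp_neg, neg_neg]
  have hu1 : r⁻¹ - 1 ≠ 0 := by
    have : 1 < r⁻¹ := (one_lt_inv₀ hr0).mpr hr1
    linarith
  have en : ∀ m : ℕ, Real.exp (-(m:ℝ) * t) = r ^ m := by
    intro m
    rw [hr, show -(m:ℝ) * t = (m:ℝ) * (-t) by ring, Real.exp_nat_mul]
  have em1 : ∀ m : ℕ, Real.exp (-((m:ℝ) + 1) * t) = r ^ (m + 1) := by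
    intro m
    rw [hr, show -((m:ℝ) + 1) * t = ((m+1:ℕ):ℝ) * (-t) by push_cast; ring, Real.exp_nat_mul]
  have exm : ∀ m : ℕ, Real.exp (-(x + (m:ℝ)) * t) = s * r ^ m := by
    intro m
    rw [hs, hr, show -(x + (m:ℝ)) * t = (-x * t) + (m:ℝ) * (-t) by ring, Real.exp_add,
      Real.exp_nat_mul]
  have ex1 : Real.exp (-(x - 1) * t) = s * r⁻¹ := by
    rw [hs, ← hu, show -(x - 1) * t = (-x * t) + t by ring, Real.exp_add]
  have hgeo : ∀ k : ℕ, ∑ m ∈ Finset.range k, r ^ m = (r ^ k - 1) / (r - 1) :=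
    fun k => geom_sum_eq (by linarith) k
  have hsum1 : ∑ m ∈ Finset.range n, frl (m + 1) t
      = ((n : ℝ) * r - r * ((r ^ n - 1) / (r - 1))) / t := by
    simp only [frl]
    rw [← Finset.sum_div]
    congr 1
    push_cast
    rw [Finset.sum_sub_distrib, Finset.sum_const, Finset.card_range]
    congr 1
    · simp [nsmul_eq_mul, hr]
    · calc ∑ m ∈ Finset.range n, Real.exp (-((m:ℝ) + 1) * t)
          = ∑ m ∈ Finset.range n, r * r ^ m := by
            refine Finset.sum_congr rfl fun m _ => ?_
            rw [em1 m, pow_succ, mul_comm]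
        _ = r * ((r ^ n - 1) / (r - 1)) := by rw [← Finset.mul_sum, hgeo]
  have hsum2 : ∑ m ∈ Finset.range (n + 1), frl (x + m) t
      = (((n : ℝ) + 1) * r - s * ((r ^ (n+1) - 1) / (r - 1))) / t := by
    simp only [frl]
    rw [← Finset.sum_div]
    congr 1
    rw [Finset.sum_sub_distrib, Finset.sum_const, Finset.card_range]
    congr 1
    · simp [nsmul_eq_mul, hr]
    · calc ∑ m ∈ Finset.range (n+1), Real.exp (-(x + (m:ℝ)) * t)
          = ∑ m ∈ Finset.range (n+1), s * r ^ m := by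
            refine Finset.sum_congr rfl fun m _ => exm m
        _ = s * ((r ^ (n+1) - 1) / (r - 1)) := by rw [← Finset.mul_sum, hgeo]
  rw [hsum1, hsum2, Ftg, Ttail, frl, en n, ex1, hu, ← hr, ← hs]
  rw [pow_succ]
  have h1r : (1:ℝ) - r ≠ 0 := by linarith
  have hinv : r⁻¹ - 1 = (1 - r) / r := by field_simp
  rw [hinv]
  field_simp
  ring

lemma Ttail_bounds {x : ℝ} (hx0 : 0 < x) (hx1 : x < 1) (n : ℕ) {t : ℝ} (ht : 0 < t) :
    0 ≤ Ttail x n t ∧ Ttail x n t ≤ Real.exp (-(n:ℝ) * t) := by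
  set r := Real.exp (-t) with hr
  set s := Real.exp (-x * t) with hs
  have hr0 : 0 < r := Real.exp_pos _
  have hr1 : r < 1 := Real.exp_lt_one_iff.mpr (by linarith)
  have hs0 : 0 < s := Real.exp_pos _
  have hs1 : s < 1 := Real.exp_lt_one_iff.mpr (by nlinarith)
  have h1r : 0 < 1 - r := by linarith
  have hrt : r * t ≤ 1 - r := by
    have h1 : t + 1 ≤ Real.exp t := Real.add_one_le_exp t
    have h2 : r * Real.exp t = 1 := by rw [hr, ← Real.exp_add]; simp
    nlinarith
  have hst : 1 - s ≤ x * t := by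
    have := Real.add_one_le_exp (-x * t)
    rw [← hs] at this; linarith
  have hsx : 1 - s ≥ x * (1 - r) := by
    have hrx : s = r ^ (x : ℝ) := by
      rw [hs, hr, show -x * t = -t * x by ring, Real.exp_mul]
    have key := Real.geom_mean_le_arith_mean2_weighted hx0.le (by linarith : (0:ℝ) ≤ 1 - x)
      hr0.le zero_le_one (by ring)
    rw [Real.one_rpow, mul_one] at key
    rw [hrx]; nlinarith [key]
  have hB0 : 0 ≤ x - r * (1 - s) / (1 - r) := by
    rw [sub_nonneg, div_le_iff₀ h1r]
    calc r * (1 - s) ≤ r * (x * t) := by nlinarith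
      _ = x * (r * t) := by ring
      _ ≤ x * (1 - r) := by nlinarith
  have hBt : x - r * (1 - s) / (1 - r) ≤ t := by
    have h2 : r * x ≤ r * (1 - s) / (1 - r) := by
      rw [le_div_iff₀ h1r]; nlinarith
    have h3 : 1 - r ≤ t := by
      have := Real.add_one_le_exp (-t); rw [← hr] at this; linarith
    nlinarith
  constructor
  · exact div_nonneg (mul_nonneg (Real.exp_pos _).le hB0) ht.le
  · rw [Ttail, div_le_iff₀ ht, ← hr, ← hs]
    have := Real.exp_pos (-(n:ℝ) * t)
    nlinarith

lemma continuousOn_Ttail (x : ℝ) (n : ℕ) : ContinuousOn (Ttail x n) (Ioi 0) := by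
  have h1 : ∀ t ∈ Ioi (0:ℝ), 1 - Real.exp (-t) ≠ 0 := by
    intro t ht
    have : Real.exp (-t) < 1 := Real.exp_lt_one_iff.mpr (by simp at ht ⊢; linarith)
    intro h; rw [sub_eq_zero] at h; rw [← h] at this; exact lt_irrefl _ this
  apply ContinuousOn.div _ continuousOn_id (fun t ht => ne_of_gt ht)
  apply ContinuousOn.mul (by fun_prop)
  apply ContinuousOn.sub continuousOn_const
  exact ContinuousOn.div (by fun_prop) (by fun_prop) h1

lemma integrableOn_Ttail {x : ℝ} (hx0 : 0 < x) (hx1 : x < 1) {n : ℕ} (hn : 1 ≤ n) :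
    IntegrableOn (Ttail x n) (Ioi 0) := by
  have hn0 : (0:ℝ) < n := by exact_mod_cast hn
  apply Integrable.mono' (exp_neg_integrableOn_Ioi 0 hn0)
  · exact (continuousOn_Ttail x n).aestronglyMeasurable measurableSet_Ioi
  · filter_upwards [self_mem_ae_restrict measurableSet_Ioi] with t ht
    obtain ⟨h0, h1⟩ := Ttail_bounds hx0 hx1 n (ht : (0:ℝ) < t)
    rw [Real.norm_eq_abs, abs_of_nonneg h0]
    exact h1

lemma integrableOn_G (x : ℝ) (hx0 : 0 < x) (n : ℕ) (hn : 1 ≤ n) :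
    IntegrableOn (fun t => x * frl n t + (∑ m ∈ Finset.range n, frl (m + 1) t)
      - ∑ m ∈ Finset.range (n + 1), frl (x + m) t) (Ioi 0) := by
  have h1 : IntegrableOn (fun t => x * frl n t) (Ioi 0) :=
    (integrableOn_frl (by exact_mod_cast hn : (0:ℝ) < n)).const_mul x
  have h2 : IntegrableOn (fun t => ∑ m ∈ Finset.range n, frl (m + 1) t) (Ioi 0) := by
    apply integrable_finset_sum
    intro m _
    exact integrableOn_frl (by positivity : (0:ℝ) < (m:ℝ) + 1)
  have h3 : IntegrableOn (fun t => ∑ m ∈ Finset.range (n+1), frl (x + m) t) (Ioi 0) := by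
    apply integrable_finset_sum
    intro m _
    exact integrableOn_frl (by positivity : (0:ℝ) < x + (m:ℝ))
  exact (h1.add h2).sub h3

lemma integrableOn_Ftg {x : ℝ} (hx0 : 0 < x) (hx1 : x < 1) :
    IntegrableOn (Ftg x) (Ioi 0) := by
  have h := (integrableOn_G x hx0 1 le_rfl).add (integrableOn_Ttail hx0 hx1 le_rfl)
  apply MeasureTheory.IntegrableOn.congr_fun h _ measurableSet_Ioi
  intro t ht
  have hk := key_identity x 1 (mem_Ioi.mp ht)
  simp only [Pi.add_apply]
  linarith [hk]

lemma log_fact (n : ℕ) : Real.log (Nat.factorial n : ℝ) = ∑ m ∈ Finset.range n, Real.log ((m:ℝ) + 1) := by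
  induction n with
  | zero => simp
  | succ n ih =>
    rw [Finset.sum_range_succ, ← ih, Nat.factorial_succ]
    push_cast
    rw [Real.log_mul (by positivity) (by exact_mod_cast Nat.cast_ne_zero.mpr n.factorial_ne_zero)]
    ring

lemma logGammaSeq_eq {x : ℝ} (hx0 : 0 < x) (hx1 : x < 1) {n : ℕ} (hn : 1 ≤ n) :
    Real.BohrMollerup.logGammaSeq x n
      = (∫ t in Ioi (0:ℝ), Ftg x t) - ∫ t in Ioi (0:ℝ), Ttail x n t := by
  have hn0 : (0:ℝ) < n := by exact_mod_cast hn
  have e1 : Real.log n = ∫ t in Ioi (0:ℝ), frl n t := (frullani hn0).symm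
  have e2 : ∀ m : ℕ, Real.log ((m:ℝ) + 1) = ∫ t in Ioi (0:ℝ), frl ((m:ℝ) + 1) t :=
    fun m => (frullani (by positivity)).symm
  have e3 : ∀ m : ℕ, Real.log (x + (m:ℝ)) = ∫ t in Ioi (0:ℝ), frl (x + (m:ℝ)) t :=
    fun m => (frullani (by positivity)).symm
  rw [Real.BohrMollerup.logGammaSeq, log_fact]
  simp_rw [e1, e2, e3]
  have h1 : IntegrableOn (fun t => x * frl n t) (Ioi 0) :=
    (integrableOn_frl hn0).const_mul x
  have h2 : IntegrableOn (fun t => ∑ m ∈ Finset.range n, frl ((m:ℝ) + 1) t) (Ioi 0) :=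
    integrable_finset_sum _ (fun m _ => integrableOn_frl (by positivity : (0:ℝ) < (m:ℝ) + 1))
  have h3 : IntegrableOn (fun t => ∑ m ∈ Finset.range (n+1), frl (x + (m:ℝ)) t) (Ioi 0) :=
    integrable_finset_sum _ (fun m _ => integrableOn_frl (by positivity : (0:ℝ) < x + (m:ℝ)))
  have s1 : (∑ m ∈ Finset.range n, ∫ t in Ioi (0:ℝ), frl ((m:ℝ) + 1) t)
      = ∫ t in Ioi (0:ℝ), ∑ m ∈ Finset.range n, frl ((m:ℝ) + 1) t :=
    (integral_finset_sum (Finset.range n)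
      (fun m _ => integrableOn_frl (by positivity : (0:ℝ) < (m:ℝ) + 1))).symm
  have s2 : (∑ m ∈ Finset.range (n+1), ∫ t in Ioi (0:ℝ), frl (x + (m:ℝ)) t)
      = ∫ t in Ioi (0:ℝ), ∑ m ∈ Finset.range (n+1), frl (x + (m:ℝ)) t :=
    (integral_finset_sum (Finset.range (n+1))
      (fun m _ => integrableOn_frl (by positivity : (0:ℝ) < x + (m:ℝ)))).symm
  have s0 : x * ∫ t in Ioi (0:ℝ), frl n t = ∫ t in Ioi (0:ℝ), x * frl n t :=
    (MeasureTheory.integral_const_mul x _).symm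
  have c1 : (∫ t in Ioi (0:ℝ), (x * frl n t + ∑ m ∈ Finset.range n, frl ((m:ℝ) + 1) t))
      = (∫ t in Ioi (0:ℝ), x * frl n t)
        + ∫ t in Ioi (0:ℝ), ∑ m ∈ Finset.range n, frl ((m:ℝ) + 1) t :=
    integral_add h1 h2
  have c2 : (∫ t in Ioi (0:ℝ), ((x * frl n t + ∑ m ∈ Finset.range n, frl ((m:ℝ) + 1) t)
        - ∑ m ∈ Finset.range (n+1), frl (x + (m:ℝ)) t))
      = (∫ t in Ioi (0:ℝ), (x * frl n t + ∑ m ∈ Finset.range n, frl ((m:ℝ) + 1) t))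
        - ∫ t in Ioi (0:ℝ), ∑ m ∈ Finset.range (n+1), frl (x + (m:ℝ)) t :=
    integral_sub (h1.add h2) h3
  rw [s0, s1, s2, ← c1, ← c2,
    ← integral_sub (integrableOn_Ftg hx0 hx1) (integrableOn_Ttail hx0 hx1 hn)]
  apply setIntegral_congr_fun measurableSet_Ioi
  intro t ht
  exact key_identity x n (mem_Ioi.mp ht)

theorem malmsten (x : ℝ) (hx0 : 0 < x) (hx1 : x < 1) :
    Real.log (Real.Gamma x)
      = ∫ t in Set.Ioi (0:ℝ),
          (Real.exp (-(x - 1) * t) - (x - 1) * (Real.exp (-t) - 1) - 1)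
            / (t * (Real.exp t - 1)) := by
  have hT : Tendsto (fun n : ℕ => ∫ t in Ioi (0:ℝ), Ttail x n t) atTop (𝓝 0) := by
    apply squeeze_zero' (Eventually.of_forall ?_) ?_
      (tendsto_inv_atTop_nhds_zero_nat (𝕜 := ℝ))
    · intro n
      exact setIntegral_nonneg measurableSet_Ioi
        (fun t ht => (Ttail_bounds hx0 hx1 n (mem_Ioi.mp ht)).1)
    · filter_upwards [eventually_ge_atTop 1] with n hn
      have hn0 : (0:ℝ) < n := by exact_mod_cast hn
      calc (∫ t in Ioi (0:ℝ), Ttail x n t)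
          ≤ ∫ t in Ioi (0:ℝ), Real.exp (-(n:ℝ) * t) :=
            setIntegral_mono_on (integrableOn_Ttail hx0 hx1 hn)
              (exp_neg_integrableOn_Ioi 0 hn0) measurableSet_Ioi
              (fun t ht => (Ttail_bounds hx0 hx1 n (mem_Ioi.mp ht)).2)
        _ = ((n:ℝ))⁻¹ := integral_exp_neg_mul hn0
  have hmain : Tendsto (fun n : ℕ => Real.BohrMollerup.logGammaSeq x n) atTop
      (𝓝 ((∫ t in Ioi (0:ℝ), Ftg x t) - 0)) := by
    apply Tendsto.congr' _ (tendsto_const_nhds.sub hT)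
    filter_upwards [eventually_ge_atTop 1] with n hn
    exact (logGammaSeq_eq hx0 hx1 hn).symm
  rw [sub_zero] at hmain
  have := tendsto_nhds_unique (Real.BohrMollerup.tendsto_log_gamma hx0) hmain
  rw [this]
  rfl
end

section
/- The Glaisher–Kinkelin limit exists: lim_{n→∞} H(n)·e^{n²/4} / n^{n²/2 + n/2 + 1/12} exists and is a positive real number, where H(n) = ∏_{k=1}^n k^k is the hyperfactorial. -/
open Real Filter

noncomputable def glF (n : ℕ) : ℝ :=
  (∑ k ∈ Finset.Icc 1 n, (k : ℝ) * Real.log k) + (n:ℝ)^2 / 4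
    - ((n:ℝ)^2 / 2 + (n:ℝ) / 2 + 1/12) * Real.log n

lemma glF_diff (n : ℕ) (hn : 1 ≤ n) :
    glF (n+1) - glF n
      = (2*(n:ℝ)+1)/4 - ((n:ℝ)^2/2 + n/2 + 1/12) * Real.log (1 + 1/n) := by
  have hn0 : (0:ℝ) < n := by exact_mod_cast hn
  have h1 : (1:ℝ) + 1/n = ((n:ℝ)+1)/n := by field_simp
  have hlog : Real.log (1 + 1/n) = Real.log ((n:ℝ)+1) - Real.log n := by
    rw [h1, Real.log_div (by positivity) (ne_of_gt hn0)]
  have hsum : ∑ k ∈ Finset.Icc 1 (n+1), (k : ℝ) * Real.log k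
      = (∑ k ∈ Finset.Icc 1 n, (k : ℝ) * Real.log k) + ((n:ℝ)+1) * Real.log ((n:ℝ)+1) := by
    rw [Finset.sum_Icc_succ_top (by omega)]
    push_cast
    ring
  simp only [glF, hsum, hlog]
  push_cast
  ring

set_option maxHeartbeats 1000000 in
lemma glF_bound (n : ℕ) (hn : 2 ≤ n) :
    |glF (n+1) - glF n| ≤ 3 / (n:ℝ)^2 := by
  have hn0 : (0:ℝ) < n := by positivity
  have hn1 : (1:ℝ) ≤ n := by exact_mod_cast hn.trans' (by norm_num)
  have hn2 : (2:ℝ) ≤ n := by exact_mod_cast hn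
  rw [glF_diff n (by omega)]
  set x : ℝ := 1/n with hx
  have hx0 : 0 < x := by positivity
  have hx1 : x < 1 := by
    rw [hx, div_lt_one hn0]; linarith
  -- log expansion bound with 3 terms, at -x
  have key := Real.abs_log_sub_add_sum_range_le (x := -x) (by rw [abs_neg, abs_of_pos hx0]; exact hx1) 3
  rw [abs_neg, abs_of_pos hx0] at key
  have hsum3 : ∑ i ∈ Finset.range 3, (-x) ^ (i + 1) / ((i:ℝ) + 1) = -x + x^2/2 - x^3/3 := by
    simp [Finset.sum_range_succ]
    ring
  rw [hsum3] at key
  have hsub : (1:ℝ) - -x = 1 + x := by ring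
  rw [hsub] at key
  -- |log(1+x) - (x - x²/2 + x³/3)| ≤ x⁴/(1-x)
  have key2 : |Real.log (1 + x) - (x - x^2/2 + x^3/3)| ≤ x^4/(1-x) := by
    have : -x + x^2/2 - x^3/3 + Real.log (1+x) = Real.log (1+x) - (x - x^2/2 + x^3/3) := by ring
    rw [this] at key
    exact key
  set c : ℝ := (n:ℝ)^2/2 + n/2 + 1/12 with hc
  have hcpos : 0 < c := by positivity
  -- main term: c * (x - x²/2 + x³/3) = n/2 + 1/4 + (9n+2)/(72n³)
  have hmain : c * (x - x^2/2 + x^3/3) = (2*(n:ℝ)+1)/4 + (9*n+2)/(72*n^3) := by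
    rw [hc, hx]; field_simp; ring
  have hsplit : (2*(n:ℝ)+1)/4 - c * Real.log (1+x)
      = -(c * (Real.log (1+x) - (x - x^2/2 + x^3/3))) - (9*n+2)/(72*n^3) := by
    linear_combination -hmain
  rw [hsplit]
  have h1 : |c * (Real.log (1+x) - (x - x^2/2 + x^3/3))| ≤ c * (x^4/(1-x)) := by
    rw [abs_mul, abs_of_pos hcpos]
    exact mul_le_mul_of_nonneg_left key2 hcpos.le
  have hcle : c ≤ (n:ℝ)^2 := by
    rw [hc]; nlinarith
  have h1x : (1:ℝ)/2 ≤ 1 - x := by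
    have : (1:ℝ)/n ≤ 1/2 := by
      apply div_le_div_of_nonneg_left <;> linarith
    rw [hx]; linarith
  have hxe : x^4/(1-x) ≤ 2/(n:ℝ)^4 := by
    have hx4 : x^4 = 1/(n:ℝ)^4 := by rw [hx]; field_simp
    rw [hx4, div_le_div_iff₀ (by linarith) (by positivity)]
    have hone : (1:ℝ)/(n:ℝ)^4 * (n:ℝ)^4 = 1 := by field_simp
    rw [hone]; linarith
  have h2 : c * (x^4/(1-x)) ≤ 2/(n:ℝ)^2 := by
    have heq : (n:ℝ)^2 * (2/(n:ℝ)^4) = 2/(n:ℝ)^2 := by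
      field_simp
    calc c * (x^4/(1-x)) ≤ (n:ℝ)^2 * (2/(n:ℝ)^4) := by
          apply mul_le_mul hcle hxe (div_nonneg (by positivity) (by linarith)) (by positivity)
      _ = 2/(n:ℝ)^2 := heq
  have h3 : (9*(n:ℝ)+2)/(72*n^3) ≤ 1/(n:ℝ)^2 := by
    rw [div_le_div_iff₀ (by positivity) (by positivity)]
    nlinarith
  have h3' : (0:ℝ) ≤ (9*(n:ℝ)+2)/(72*n^3) := by positivity
  calc |-(c * (Real.log (1+x) - (x - x^2/2 + x^3/3))) - (9*(n:ℝ)+2)/(72*n^3)|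
      ≤ |-(c * (Real.log (1+x) - (x - x^2/2 + x^3/3)))| + |(9*(n:ℝ)+2)/(72*n^3)| :=
        abs_sub _ _
    _ = |c * (Real.log (1+x) - (x - x^2/2 + x^3/3))| + |(9*(n:ℝ)+2)/(72*n^3)| := by
        rw [abs_neg]
    _ ≤ 2/(n:ℝ)^2 + 1/(n:ℝ)^2 := by
        rw [abs_of_nonneg h3']
        exact add_le_add (h1.trans h2) h3
    _ = 3/(n:ℝ)^2 := by ring

lemma glF_summable : Summable (fun n : ℕ => glF (n+1) - glF n) := by
  have hg : Summable (fun n : ℕ => 3 / ((n:ℝ)+2)^2) := by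
    have h : Summable (fun n : ℕ => 3 * (1/((n:ℝ))^2)) :=
      (summable_one_div_nat_pow.mpr (by norm_num)).mul_left 3
    have h2 := (summable_nat_add_iff 2).mpr h
    apply h2.congr
    intro n
    push_cast
    ring
  have habs : Summable (fun n : ℕ => |glF (n+2+1) - glF (n+2)|) := by
    apply Summable.of_nonneg_of_le (fun n => abs_nonneg _) (fun n => ?_) hg
    have h := glF_bound (n+2) (by omega)
    push_cast at h
    exact h
  have h2 : Summable (fun n : ℕ => glF (n+2+1) - glF (n+2)) := habs.of_abs
  exact (summable_nat_add_iff 2).mp h2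

lemma glF_tendsto : ∃ L : ℝ, Tendsto glF atTop (nhds L) := by
  obtain ⟨s, hs⟩ := glF_summable
  refine ⟨glF 0 + s, ?_⟩
  have h := hs.tendsto_sum_nat
  have h2 : Tendsto (fun n => glF 0 + ∑ i ∈ Finset.range n, (glF (i+1) - glF i)) atTop
      (nhds (glF 0 + s)) := tendsto_const_nhds.add h
  apply h2.congr
  intro n
  rw [Finset.sum_range_sub]
  ring

theorem glaisher_limit_exists :
    ∃ A : ℝ, 0 < A ∧
      Tendsto (fun n : ℕ =>
          (∏ k ∈ Finset.Icc 1 n, (k : ℝ)^k) * Real.exp ((n:ℝ)^2 / 4)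
            / (n : ℝ) ^ ((n:ℝ)^2 / 2 + (n:ℝ) / 2 + 1/12))
        atTop (nhds A) := by
  obtain ⟨L, hL⟩ := glF_tendsto
  refine ⟨Real.exp L, Real.exp_pos L, ?_⟩
  have h : Tendsto (fun n => Real.exp (glF n)) atTop (nhds (Real.exp L)) :=
    (Real.continuous_exp.continuousAt.tendsto).comp hL
  apply h.congr'
  filter_upwards [eventually_ge_atTop 1] with n hn
  have hn0 : (0:ℝ) < n := by exact_mod_cast hn
  have hprod : Real.exp (∑ k ∈ Finset.Icc 1 n, (k : ℝ) * Real.log k)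
      = ∏ k ∈ Finset.Icc 1 n, (k : ℝ)^k := by
    rw [Real.exp_sum]
    apply Finset.prod_congr rfl
    intro k hk
    have hk1 : 1 ≤ k := (Finset.mem_Icc.mp hk).1
    have hk0 : (0:ℝ) < k := by exact_mod_cast hk1
    rw [Real.exp_nat_mul, Real.exp_log hk0]
  have hpow : (n : ℝ) ^ ((n:ℝ)^2 / 2 + (n:ℝ) / 2 + 1/12)
      = Real.exp (((n:ℝ)^2 / 2 + (n:ℝ) / 2 + 1/12) * Real.log n) := by
    rw [Real.rpow_def_of_pos hn0]
    ring_nf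
  rw [glF, sub_eq_add_neg, Real.exp_add, Real.exp_add, hprod, hpow, Real.exp_neg]
  field_simp
end
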